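/- Let {n₁, n₂, n₃} be an orthonormal basis of ℝ³ and ρ a qubit density matrix. Then every pure-state decomposition ρ = ∑ₖ pₖ |ψₖ⟩⟨ψₖ| satisfies ∑ₖ pₖ (ΔL_{n₁})²_{ψₖ} + (ΔL_{n₂})²_ρ + (ΔL_{n₃})²_ρ ≥ 1/2, and there exists a pure-state decomposition for which equality holds. (Since the quantum Fisher information is the convex roof of four times the variance, this expresses the qubit uncertainty equality (1/4)F_Q[ρ, L_{n₁}] + (ΔL_{n₂})²_ρ + (ΔL_{n₃})²_ρ = 1/2.) -/

import Mathlib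

open Matrix BigOperators
open scoped ComplexOrder

/-- The Pauli matrix σx. -/
def sigmaX : Matrix (Fin 2) (Fin 2) ℂ := !![0, 1; 1, 0]

/-- The Pauli matrix σy. -/
def sigmaY : Matrix (Fin 2) (Fin 2) ℂ := !![0, -Complex.I; Complex.I, 0]

/-- The Pauli matrix σz. -/
def sigmaZ : Matrix (Fin 2) (Fin 2) ℂ := !![1, 0; 0, -1]

/-- The spin-1/2 operator L_n = (n₁σx + n₂σy + n₃σz)/2 along the direction n ∈ ℝ³. -/
noncomputable def Lspin (n : Fin 3 → ℝ) : Matrix (Fin 2) (Fin 2) ℂ :=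
  (1 / 2 : ℂ) • ((n 0 : ℂ) • sigmaX + (n 1 : ℂ) • sigmaY + (n 2 : ℂ) • sigmaZ)

/-- A qubit density matrix: 2×2 positive semidefinite with unit trace. -/
def IsDensity (ρ : Matrix (Fin 2) (Fin 2) ℂ) : Prop :=
  ρ.PosSemidef ∧ ρ.trace = 1

/-- The rank-one projection |ψ⟩⟨ψ|. -/
def ketbra (ψ : Fin 2 → ℂ) : Matrix (Fin 2) (Fin 2) ℂ :=
  Matrix.vecMulVec ψ (star ψ)

/-- Pure-state variance (ΔA)²_ψ = ⟨ψ, A²ψ⟩ − ⟨ψ, Aψ⟩². -/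
noncomputable def pureVar (A : Matrix (Fin 2) (Fin 2) ℂ) (ψ : Fin 2 → ℂ) : ℝ :=
  (star ψ ⬝ᵥ (A * A).mulVec ψ).re - ((star ψ ⬝ᵥ A.mulVec ψ).re) ^ 2

/-- Mixed-state variance (ΔA)²_ρ = Tr(A²ρ) − (Tr(Aρ))². -/
noncomputable def mixVar (A ρ : Matrix (Fin 2) (Fin 2) ℂ) : ℝ :=
  ((A * A * ρ).trace).re - (((A * ρ).trace).re) ^ 2

/-- The purity Tr(ρ²). -/
noncomputable def purity (ρ : Matrix (Fin 2) (Fin 2) ℂ) : ℝ :=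
  ((ρ * ρ).trace).re

/-! ### Auxiliary lemmas -/

lemma Lsq (n : Fin 3 → ℝ) (h : n ⬝ᵥ n = 1) : Lspin n * Lspin n = (1/4 : ℂ) • 1 := by
  simp only [dotProduct, Fin.sum_univ_three] at h
  have h' : ((n 0 : ℂ))^2 + (n 1 : ℂ)^2 + (n 2 : ℂ)^2 = 1 := by
    have := congrArg (Complex.ofReal) h; push_cast at this; linear_combination this
  ext i j
  fin_cases i <;> fin_cases j <;>
    simp [Lspin, sigmaX, sigmaY, sigmaZ, Matrix.mul_apply, Fin.sum_univ_two, Matrix.one_apply] <;>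
    first
      | ring1
      | linear_combination (1/4 : ℂ) * h' - ((n 1 : ℂ)^2/4) * Complex.I_sq

lemma pauli_expand (X : Matrix (Fin 2) (Fin 2) ℂ) :
    X = (1/2 : ℂ) • (X.trace • 1 + (X * sigmaX).trace • sigmaX
      + (X * sigmaY).trace • sigmaY + (X * sigmaZ).trace • sigmaZ) := by
  ext i j
  fin_cases i <;> fin_cases j <;>
    simp [sigmaX, sigmaY, sigmaZ, Matrix.trace_fin_two, Matrix.mul_apply,
      Fin.sum_univ_two, Matrix.one_apply] <;>
    first
      | ring1
      | linear_combination ((X 0 1 - X 1 0)/2) * Complex.I_sq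
      | linear_combination ((X 1 0 - X 0 1)/2) * Complex.I_sq

lemma trace_mul_ketbra (A : Matrix (Fin 2) (Fin 2) ℂ) (ψ : Fin 2 → ℂ) :
    (A * ketbra ψ).trace = star ψ ⬝ᵥ A.mulVec ψ := by
  simp [ketbra, vecMulVec, Matrix.trace_fin_two, Matrix.mul_apply, dotProduct,
    mulVec, Fin.sum_univ_two]
  ring

lemma ketbra_trace (ψ : Fin 2 → ℂ) (h : star ψ ⬝ᵥ ψ = 1) : (ketbra ψ).trace = 1 := by
  simp only [dotProduct, Fin.sum_univ_two, Pi.star_apply, Complex.star_def] at h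
  simp [ketbra, vecMulVec, Matrix.trace_fin_two, Complex.star_def]
  linear_combination h

lemma ketbra_sq_trace (ψ : Fin 2 → ℂ) (h : star ψ ⬝ᵥ ψ = 1) :
    (ketbra ψ * ketbra ψ).trace = 1 := by
  simp only [dotProduct, Fin.sum_univ_two, Pi.star_apply, Complex.star_def] at h
  simp [ketbra, vecMulVec, Matrix.trace_fin_two, Matrix.mul_apply, Fin.sum_univ_two,
    Complex.star_def]
  linear_combination ((starRingEnd ℂ) (ψ 0) * ψ 0 + (starRingEnd ℂ) (ψ 1) * ψ 1 + 1) * h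

lemma frob (X : Matrix (Fin 2) (Fin 2) ℂ) :
    (X * X).trace = (X.trace)^2/2 + (((X * sigmaX).trace)^2 + ((X * sigmaY).trace)^2
      + ((X * sigmaZ).trace)^2)/2 := by
  simp [sigmaX, sigmaY, sigmaZ, Matrix.trace_fin_two, Matrix.mul_apply, Fin.sum_univ_two]
  linear_combination (-(X 0 1 - X 1 0)^2/2) * Complex.I_sq

lemma Lspin_herm (n : Fin 3 → ℝ) : (Lspin n)ᴴ = Lspin n := by
  ext i j
  fin_cases i <;> fin_cases j <;>
    simp [Lspin, sigmaX, sigmaY, sigmaZ, conjTranspose_apply, Complex.ext_iff]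

lemma quadform_real (A : Matrix (Fin 2) (Fin 2) ℂ) (hA : Aᴴ = A) (ψ : Fin 2 → ℂ) :
    (star ψ ⬝ᵥ A.mulVec ψ) = (((star ψ ⬝ᵥ A.mulVec ψ).re : ℝ) : ℂ) := by
  have hc : ∀ i j, (starRingEnd ℂ) (A i j) = A j i := by
    intro i j
    have := congrFun (congrFun hA j) i
    simpa [conjTranspose_apply] using this
  have key : (starRingEnd ℂ) (star ψ ⬝ᵥ A.mulVec ψ) = star ψ ⬝ᵥ A.mulVec ψ := by
    simp only [dotProduct, mulVec, Fin.sum_univ_two, Pi.star_apply, Complex.star_def,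
      map_add, _root_.map_mul, Complex.conj_conj, hc]
    ring
  exact (Complex.conj_eq_iff_re.mp key).symm

lemma col_orth (n₁ n₂ n₃ : Fin 3 → ℝ)
    (h11 : n₁ ⬝ᵥ n₁ = 1) (h22 : n₂ ⬝ᵥ n₂ = 1) (h33 : n₃ ⬝ᵥ n₃ = 1)
    (h12 : n₁ ⬝ᵥ n₂ = 0) (h13 : n₁ ⬝ᵥ n₃ = 0) (h23 : n₂ ⬝ᵥ n₃ = 0) (a b : Fin 3) :
    n₁ a * n₁ b + n₂ a * n₂ b + n₃ a * n₃ b = if a = b then 1 else 0 := by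
  classical
  simp only [dotProduct, Fin.sum_univ_three] at h11 h22 h33 h12 h13 h23
  set N : Matrix (Fin 3) (Fin 3) ℝ := Matrix.of ![n₁, n₂, n₃] with hNdef
  have hN : N * Nᵀ = 1 := by
    ext i j
    fin_cases i <;> fin_cases j <;>
      simp [hNdef, Matrix.mul_apply, Matrix.one_apply, Fin.sum_univ_three,
        Matrix.transpose_apply, Matrix.vecHead, Matrix.vecTail] <;>
      first
        | linear_combination (h11 : _)
        | linear_combination (h22 : _)
        | linear_combination (h33 : _)
        | linear_combination (h12 : _)
        | linear_combination (h13 : _)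
        | linear_combination (h23 : _)
  have hN' : Nᵀ * N = 1 := mul_eq_one_comm.mp hN
  have h2 : (Nᵀ * N) a b = (1 : Matrix (Fin 3) (Fin 3) ℝ) a b := by rw [hN']
  simpa [hNdef, Matrix.mul_apply, Fin.sum_univ_three, Matrix.one_apply] using h2

noncomputable def blochMat (s : Fin 3 → ℝ) : Matrix (Fin 2) (Fin 2) ℂ :=
  (1/2 : ℂ) • ((1 : Matrix (Fin 2) (Fin 2) ℂ) + (s 0 : ℂ) • sigmaX + (s 1 : ℂ) • sigmaY
    + (s 2 : ℂ) • sigmaZ)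

lemma blochMat_eq (s : Fin 3 → ℝ) :
    blochMat s = !![(1 + (s 2 : ℂ))/2, ((s 0 : ℂ) - (s 1 : ℂ)*Complex.I)/2;
                    ((s 0 : ℂ) + (s 1 : ℂ)*Complex.I)/2, (1 - (s 2 : ℂ))/2] := by
  ext i j
  fin_cases i <;> fin_cases j <;>
    simp [blochMat, sigmaX, sigmaY, sigmaZ, Matrix.one_apply] <;> ring

lemma Lspin_eq (n : Fin 3 → ℝ) :
    Lspin n = !![(n 2 : ℂ)/2, ((n 0 : ℂ) - (n 1 : ℂ)*Complex.I)/2;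
                 ((n 0 : ℂ) + (n 1 : ℂ)*Complex.I)/2, -(n 2 : ℂ)/2] := by
  ext i j
  fin_cases i <;> fin_cases j <;>
    simp [Lspin, sigmaX, sigmaY, sigmaZ] <;> ring

lemma trace_mul_Lspin (X : Matrix (Fin 2) (Fin 2) ℂ) (n : Fin 3 → ℝ) :
    (X * Lspin n).trace = (1/2 : ℂ) * ((n 0 : ℂ) * (X * sigmaX).trace
      + (n 1 : ℂ) * (X * sigmaY).trace + (n 2 : ℂ) * (X * sigmaZ).trace) := by
  simp [Lspin, mul_add, mul_smul_comm, Matrix.trace_add, Matrix.trace_smul, Matrix.mul_smul,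
    smul_smul]

lemma trace_Lspin_bloch (n s : Fin 3 → ℝ) :
    (Lspin n * blochMat s).trace = (((n ⬝ᵥ s : ℝ) : ℂ))/2 := by
  rw [Lspin_eq, blochMat_eq]
  simp only [dotProduct, Fin.sum_univ_three]
  push_cast
  simp [Matrix.trace_fin_two, Matrix.mul_apply, Fin.sum_univ_two]
  linear_combination (-((n 1 : ℂ)) * (s 1 : ℂ)/2) * Complex.I_sq

lemma blochMat_combo (q₀ q₁ : ℝ) (s₀ s₁ w : Fin 3 → ℝ) (hq : q₀ + q₁ = 1)
    (hw : ∀ a, q₀ * s₀ a + q₁ * s₁ a = w a) :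
    q₀ • blochMat s₀ + q₁ • blochMat s₁ = blochMat w := by
  have hqc : (q₀ : ℂ) + (q₁ : ℂ) = 1 := by exact_mod_cast congrArg Complex.ofReal hq
  have hwc : ∀ a, (q₀ : ℂ) * (s₀ a : ℂ) + (q₁ : ℂ) * (s₁ a : ℂ) = (w a : ℂ) := by
    intro a; exact_mod_cast congrArg Complex.ofReal (hw a)
  rw [blochMat_eq, blochMat_eq, blochMat_eq]
  ext i j
  fin_cases i <;> fin_cases j <;>
    simp [Complex.real_smul] <;>
    first
      | linear_combination (1/2 : ℂ) * hqc + (1/2 : ℂ) * hwc 2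
      | linear_combination (1/2 : ℂ) * hqc - (1/2 : ℂ) * hwc 2
      | linear_combination (1/2 : ℂ) * hwc 0 - (Complex.I/2) * hwc 1
      | linear_combination (1/2 : ℂ) * hwc 0 + (Complex.I/2) * hwc 1

lemma exists_pure (s : Fin 3 → ℝ) (hs : s ⬝ᵥ s = 1) :
    ∃ ψ : Fin 2 → ℂ, star ψ ⬝ᵥ ψ = 1 ∧ ketbra ψ = blochMat s := by
  simp only [dotProduct, Fin.sum_univ_three] at hs
  have hc2 : s 0 ^ 2 + s 1 ^ 2 + s 2 ^ 2 = 1 := by nlinarith [hs]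
  have hc2c : (s 0 : ℂ) ^ 2 + (s 1 : ℂ) ^ 2 + (s 2 : ℂ) ^ 2 = 1 := by
    exact_mod_cast congrArg Complex.ofReal hc2
  by_cases h : s 2 = -1
  · have h0 : s 0 = 0 := by nlinarith
    have h1 : s 1 = 0 := by nlinarith
    refine ⟨![0, 1], by simp [dotProduct, Fin.sum_univ_two], ?_⟩
    rw [blochMat_eq, h0, h1, h]
    ext i j
    fin_cases i <;> fin_cases j <;> simp [ketbra, vecMulVec] <;> norm_num
  · have hge : -1 ≤ s 2 := by nlinarith
    have hpos : 0 < 1 + s 2 := by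
      rcases lt_or_eq_of_le hge with hlt | heq
      · linarith
      · exact absurd heq.symm h
    set d := Real.sqrt (2*(1 + s 2)) with hddef
    have hd2 : d^2 = 2*(1 + s 2) := Real.sq_sqrt (by linarith)
    have hd0 : 0 < d := Real.sqrt_pos.mpr (by linarith)
    have hdc : ((d:ℂ))^2 = 2*(1+(s 2:ℂ)) := by
      have := congrArg Complex.ofReal hd2; push_cast at this; exact this
    have hdne : (d:ℂ) ≠ 0 := by exact_mod_cast hd0.ne'
    refine ⟨![(d/2 : ℂ), ((s 0 : ℂ) + (s 1 : ℂ)*Complex.I)/(d : ℂ)], ?_, ?_⟩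
    · simp only [dotProduct, Fin.sum_univ_two, Pi.star_apply, Complex.star_def,
        Matrix.cons_val_zero, Matrix.cons_val_one, Matrix.head_cons, map_div₀, map_add,
        _root_.map_mul, Complex.conj_ofReal, Complex.conj_I, map_ofNat]
      field_simp
      ring_nf
      linear_combination (4 : ℂ) * hc2c + ((d:ℂ)^2 - 2 + 2*(s 2:ℂ)) * hdc
        - 4*(s 1:ℂ)^2 * Complex.I_sq
    · rw [blochMat_eq]
      ext i j
      fin_cases i <;> fin_cases j <;>
        simp [ketbra, vecMulVec, Complex.star_def, map_div₀, Complex.conj_ofReal,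
          Complex.conj_I, map_ofNat] <;>
        field_simp <;>
        first
          | ring1
          | linear_combination (2 : ℂ) * hdc
          | linear_combination (2 : ℂ) * hc2c - (1-(s 2:ℂ)) * hdc - 2*(s 1:ℂ)^2 * Complex.I_sq
          | linear_combination hdc

lemma det_bloch (s : Fin 3 → ℝ) :
    (blochMat s).det = (((1 - (s 0^2 + s 1^2 + s 2^2))/4 : ℝ) : ℂ) := by
  rw [blochMat_eq, Matrix.det_fin_two_of]
  push_cast
  linear_combination ((s 1:ℂ)^2/4) * Complex.I_sq

lemma bloch_norm_le (s : Fin 3 → ℝ) (h : (blochMat s).PosSemidef) :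
    s 0^2 + s 1^2 + s 2^2 ≤ 1 := by
  have hH := h.1
  have hdet : (blochMat s).det = ((∏ i, hH.eigenvalues i : ℝ) : ℂ) := by
    rw [hH.det_eq_prod_eigenvalues]; push_cast; rfl
  have hpr : 0 ≤ ∏ i, hH.eigenvalues i :=
    Finset.prod_nonneg fun i _ => h.eigenvalues_nonneg i
  have h3 : (((1 - (s 0^2 + s 1^2 + s 2^2))/4 : ℝ) : ℂ) = ((∏ i, hH.eigenvalues i : ℝ) : ℂ) := by
    rw [← det_bloch s, hdet]
  have h4 := Complex.ofReal_inj.mp h3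
  linarith [hpr, h4.ge, h4.le]

lemma pureVar_eq (n : Fin 3 → ℝ) (hn : n ⬝ᵥ n = 1) (ψ : Fin 2 → ℂ)
    (hψ : star ψ ⬝ᵥ ψ = 1) :
    pureVar (Lspin n) ψ = 1/4 - ((star ψ ⬝ᵥ (Lspin n).mulVec ψ).re)^2 := by
  unfold pureVar
  rw [Lsq n hn]
  rw [smul_mulVec, one_mulVec, dotProduct_smul, hψ]
  norm_num

lemma mixVar_eq (n : Fin 3 → ℝ) (hn : n ⬝ᵥ n = 1) (ρ : Matrix (Fin 2) (Fin 2) ℂ)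
    (htr : ρ.trace = 1) :
    mixVar (Lspin n) ρ = 1/4 - (((Lspin n * ρ).trace).re)^2 := by
  unfold mixVar
  rw [Lsq n hn, Matrix.smul_mul, Matrix.one_mul, Matrix.trace_smul, htr]
  norm_num

lemma trace_L_rho (A ρ : Matrix (Fin 2) (Fin 2) ℂ) {m : ℕ} (p : Fin m → ℝ)
    (ψ : Fin m → (Fin 2 → ℂ)) (hdec : ρ = ∑ k, p k • ketbra (ψ k)) :
    ((A * ρ).trace).re = ∑ k, p k * (star (ψ k) ⬝ᵥ A.mulVec (ψ k)).re := by
  rw [hdec, Finset.mul_sum, Matrix.trace_sum, Complex.re_sum]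
  refine Finset.sum_congr rfl fun k _ => ?_
  rw [mul_smul_comm, Matrix.trace_smul, trace_mul_ketbra]
  simp only [Complex.real_smul, Complex.mul_re, Complex.ofReal_re, Complex.ofReal_im]
  ring

lemma frob_n (n₁ n₂ n₃ : Fin 3 → ℝ)
    (h11 : n₁ ⬝ᵥ n₁ = 1) (h22 : n₂ ⬝ᵥ n₂ = 1) (h33 : n₃ ⬝ᵥ n₃ = 1)
    (h12 : n₁ ⬝ᵥ n₂ = 0) (h13 : n₁ ⬝ᵥ n₃ = 0) (h23 : n₂ ⬝ᵥ n₃ = 0)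
    (X : Matrix (Fin 2) (Fin 2) ℂ) :
    (X * X).trace = (X.trace)^2/2
      + 2*(((X * Lspin n₁).trace)^2 + ((X * Lspin n₂).trace)^2 + ((X * Lspin n₃).trace)^2) := by
  have C := col_orth n₁ n₂ n₃ h11 h22 h33 h12 h13 h23
  have cast6 : ∀ (a b : Fin 3) (v : ℝ),
      (n₁ a * n₁ b + n₂ a * n₂ b + n₃ a * n₃ b = v) →
      ((n₁ a : ℂ) * (n₁ b : ℂ) + (n₂ a : ℂ) * (n₂ b : ℂ) + (n₃ a : ℂ) * (n₃ b : ℂ) = (v : ℂ)) := by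
    intro a b v hv
    exact_mod_cast congrArg Complex.ofReal hv
  have C00 := cast6 0 0 1 (by simpa using C 0 0)
  have C11 := cast6 1 1 1 (by simpa using C 1 1)
  have C22 := cast6 2 2 1 (by simpa using C 2 2)
  have C01 := cast6 0 1 0 (by simpa using C 0 1)
  have C02 := cast6 0 2 0 (by simpa using C 0 2)
  have C12 := cast6 1 2 0 (by simpa using C 1 2)
  rw [frob X, trace_mul_Lspin X n₁, trace_mul_Lspin X n₂, trace_mul_Lspin X n₃]
  push_cast at C00 C11 C22 C01 C02 C12
  linear_combination (-(((X * sigmaX).trace)^2)/2) * C00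
    + (-(((X * sigmaY).trace)^2)/2) * C11
    + (-(((X * sigmaZ).trace)^2)/2) * C22
    + (-(((X * sigmaX).trace) * ((X * sigmaY).trace))) * C01
    + (-(((X * sigmaX).trace) * ((X * sigmaZ).trace))) * C02
    + (-(((X * sigmaY).trace) * ((X * sigmaZ).trace))) * C12

lemma pure_sum (n₁ n₂ n₃ : Fin 3 → ℝ)
    (h11 : n₁ ⬝ᵥ n₁ = 1) (h22 : n₂ ⬝ᵥ n₂ = 1) (h33 : n₃ ⬝ᵥ n₃ = 1)
    (h12 : n₁ ⬝ᵥ n₂ = 0) (h13 : n₁ ⬝ᵥ n₃ = 0) (h23 : n₂ ⬝ᵥ n₃ = 0)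
    (ψ : Fin 2 → ℂ) (hψ : star ψ ⬝ᵥ ψ = 1) :
    ((star ψ ⬝ᵥ (Lspin n₁).mulVec ψ).re)^2 + ((star ψ ⬝ᵥ (Lspin n₂).mulVec ψ).re)^2
      + ((star ψ ⬝ᵥ (Lspin n₃).mulVec ψ).re)^2 = 1/4 := by
  have hfr := frob_n n₁ n₂ n₃ h11 h22 h33 h12 h13 h23 (ketbra ψ)
  rw [ketbra_sq_trace ψ hψ, ketbra_trace ψ hψ] at hfr
  have he : ∀ n : Fin 3 → ℝ,
      (ketbra ψ * Lspin n).trace = (((star ψ ⬝ᵥ (Lspin n).mulVec ψ).re : ℝ) : ℂ) := by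
    intro n
    rw [Matrix.trace_mul_comm]
    exact (trace_mul_ketbra (Lspin n) ψ).trans (quadform_real (Lspin n) (Lspin_herm n) ψ)
  rw [he n₁, he n₂, he n₃] at hfr
  have h2 : ((1 : ℝ) : ℂ) = ((1/2 + 2*(((star ψ ⬝ᵥ (Lspin n₁).mulVec ψ).re)^2
      + ((star ψ ⬝ᵥ (Lspin n₂).mulVec ψ).re)^2
      + ((star ψ ⬝ᵥ (Lspin n₃).mulVec ψ).re)^2) : ℝ) : ℂ) := by
    push_cast
    linear_combination hfr
  have h3 := Complex.ofReal_inj.mp h2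
  linarith

set_option maxHeartbeats 1000000 in
/-- Qubit uncertainty equality (1/4)F_Q[ρ,L_{n₁}] + (ΔL_{n₂})²_ρ + (ΔL_{n₃})²_ρ = 1/2,
expressed via pure-state decompositions: every decomposition gives a sum ≥ 1/2,
and some decomposition attains 1/2. -/
theorem stmt_9 (n₁ n₂ n₃ : Fin 3 → ℝ)
    (h11 : n₁ ⬝ᵥ n₁ = 1) (h22 : n₂ ⬝ᵥ n₂ = 1) (h33 : n₃ ⬝ᵥ n₃ = 1)
    (h12 : n₁ ⬝ᵥ n₂ = 0) (h13 : n₁ ⬝ᵥ n₃ = 0) (h23 : n₂ ⬝ᵥ n₃ = 0)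
    (ρ : Matrix (Fin 2) (Fin 2) ℂ) (hρ : IsDensity ρ) :
    (∀ (m : ℕ) (p : Fin m → ℝ) (ψ : Fin m → (Fin 2 → ℂ)),
      (∀ k, 0 ≤ p k) → (∑ k, p k) = 1 →
      (∀ k, star (ψ k) ⬝ᵥ ψ k = 1) →
      ρ = (∑ k, p k • ketbra (ψ k)) →
      1 / 2 ≤ (∑ k, p k * pureVar (Lspin n₁) (ψ k))
                + mixVar (Lspin n₂) ρ + mixVar (Lspin n₃) ρ) ∧
    (∃ (m : ℕ) (p : Fin m → ℝ) (ψ : Fin m → (Fin 2 → ℂ)),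
      (∀ k, 0 ≤ p k) ∧ (∑ k, p k) = 1 ∧
      (∀ k, star (ψ k) ⬝ᵥ ψ k = 1) ∧
      ρ = (∑ k, p k • ketbra (ψ k)) ∧
      (∑ k, p k * pureVar (Lspin n₁) (ψ k))
        + mixVar (Lspin n₂) ρ + mixVar (Lspin n₃) ρ = 1 / 2) := by
  obtain ⟨hpsd, htr⟩ := hρ
  have main : ∀ (m : ℕ) (p : Fin m → ℝ) (ψ : Fin m → (Fin 2 → ℂ)),
      (∑ k, p k) = 1 →
      (∀ k, star (ψ k) ⬝ᵥ ψ k = 1) →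
      ρ = (∑ k, p k • ketbra (ψ k)) →
      (∑ k, p k * pureVar (Lspin n₁) (ψ k)) + mixVar (Lspin n₂) ρ + mixVar (Lspin n₃) ρ
        = 1/2 + ((∑ k, p k * ((star (ψ k) ⬝ᵥ (Lspin n₂).mulVec (ψ k)).re)^2)
                  - (∑ k, p k * (star (ψ k) ⬝ᵥ (Lspin n₂).mulVec (ψ k)).re)^2)
              + ((∑ k, p k * ((star (ψ k) ⬝ᵥ (Lspin n₃).mulVec (ψ k)).re)^2)
                  - (∑ k, p k * (star (ψ k) ⬝ᵥ (Lspin n₃).mulVec (ψ k)).re)^2) := by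
    intro m p ψ hps hψ hdec
    rw [mixVar_eq n₂ h22 ρ htr, mixVar_eq n₃ h33 ρ htr,
        trace_L_rho (Lspin n₂) ρ p ψ hdec, trace_L_rho (Lspin n₃) ρ p ψ hdec]
    have hsum1 : (∑ k, p k * pureVar (Lspin n₁) (ψ k))
        = ∑ k, (p k * ((star (ψ k) ⬝ᵥ (Lspin n₂).mulVec (ψ k)).re)^2
              + p k * ((star (ψ k) ⬝ᵥ (Lspin n₃).mulVec (ψ k)).re)^2) := by
      refine Finset.sum_congr rfl fun k _ => ?_
      rw [pureVar_eq n₁ h11 (ψ k) (hψ k)]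
      have hps' := pure_sum n₁ n₂ n₃ h11 h22 h33 h12 h13 h23 (ψ k) (hψ k)
      linear_combination (-(p k)) * hps'
    rw [hsum1, Finset.sum_add_distrib]
    have hsp : ∑ k, p k * (1/4 : ℝ) = 1/4 := by
      rw [← Finset.sum_mul, hps, one_mul]
    ring
  constructor
  · intro m p ψ hp hps hψ hdec
    rw [main m p ψ hps hψ hdec]
    have cs : ∀ E : Fin m → ℝ, (∑ k, p k * E k)^2 ≤ ∑ k, p k * (E k)^2 := by
      intro E
      have h := Finset.sum_mul_sq_le_sq_mul_sq Finset.univ (fun k => Real.sqrt (p k))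
        (fun k => Real.sqrt (p k) * E k)
      have e1 : ∀ k : Fin m, Real.sqrt (p k) * (Real.sqrt (p k) * E k) = p k * E k := fun k => by
        rw [← mul_assoc, Real.mul_self_sqrt (hp k)]
      have e2 : ∀ k : Fin m, (Real.sqrt (p k))^2 = p k := fun k => Real.sq_sqrt (hp k)
      have e3 : ∀ k : Fin m, (Real.sqrt (p k) * E k)^2 = p k * (E k)^2 := fun k => by
        rw [mul_pow, e2]
      calc (∑ k, p k * E k)^2
          = (∑ k, Real.sqrt (p k) * (Real.sqrt (p k) * E k))^2 := by simp_rw [e1]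
        _ ≤ (∑ k, (Real.sqrt (p k))^2) * ∑ k, (Real.sqrt (p k) * E k)^2 := h
        _ = ∑ k, p k * (E k)^2 := by simp_rw [e2, e3, hps, one_mul]
    have d2 : (∑ k, p k * (star (ψ k) ⬝ᵥ (Lspin n₂).mulVec (ψ k)).re)^2
        ≤ ∑ k, p k * ((star (ψ k) ⬝ᵥ (Lspin n₂).mulVec (ψ k)).re)^2 := cs _
    have d3 : (∑ k, p k * (star (ψ k) ⬝ᵥ (Lspin n₃).mulVec (ψ k)).re)^2
        ≤ ∑ k, p k * ((star (ψ k) ⬝ᵥ (Lspin n₃).mulVec (ψ k)).re)^2 := cs _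
    linarith
  · -- existence of an optimal decomposition
    have hherm : ρᴴ = ρ := hpsd.1
    have hXh : sigmaXᴴ = sigmaX := by
      ext i j; fin_cases i <;> fin_cases j <;> simp [sigmaX, conjTranspose_apply]
    have hYh : sigmaYᴴ = sigmaY := by
      ext i j; fin_cases i <;> fin_cases j <;> simp [sigmaY, conjTranspose_apply, Complex.ext_iff]
    have hZh : sigmaZᴴ = sigmaZ := by
      ext i j; fin_cases i <;> fin_cases j <;> simp [sigmaZ, conjTranspose_apply]
    have hreal : ∀ σ : Matrix (Fin 2) (Fin 2) ℂ, σᴴ = σ →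
        ((ρ * σ).trace) = ((((ρ * σ).trace).re : ℝ) : ℂ) := by
      intro σ hσ
      have key : (starRingEnd ℂ) ((ρ * σ).trace) = (ρ * σ).trace := by
        have e1 : (starRingEnd ℂ) ((ρ * σ).trace) = ((ρ * σ)ᴴ).trace := by
          rw [Matrix.trace_conjTranspose]; rfl
        rw [e1, Matrix.conjTranspose_mul, hσ, hherm, Matrix.trace_mul_comm]
      exact (Complex.conj_eq_iff_re.mp key).symm
    obtain ⟨b, hρb⟩ : ∃ b : Fin 3 → ℝ, ρ = blochMat b := by
      refine ⟨![((ρ * sigmaX).trace).re, ((ρ * sigmaY).trace).re, ((ρ * sigmaZ).trace).re], ?_⟩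
      conv_lhs => rw [pauli_expand ρ]
      rw [htr, hreal sigmaX hXh, hreal sigmaY hYh, hreal sigmaZ hZh]
      unfold blochMat
      simp
    have hb1 : b 0^2 + b 1^2 + b 2^2 ≤ 1 := bloch_norm_le b (hρb ▸ hpsd)
    have C := col_orth n₁ n₂ n₃ h11 h22 h33 h12 h13 h23
    have C00 : n₁ 0 * n₁ 0 + n₂ 0 * n₂ 0 + n₃ 0 * n₃ 0 = 1 := by simpa using C 0 0
    have C11 : n₁ 1 * n₁ 1 + n₂ 1 * n₂ 1 + n₃ 1 * n₃ 1 = 1 := by simpa using C 1 1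
    have C22 : n₁ 2 * n₁ 2 + n₂ 2 * n₂ 2 + n₃ 2 * n₃ 2 = 1 := by simpa using C 2 2
    have C01 : n₁ 0 * n₁ 1 + n₂ 0 * n₂ 1 + n₃ 0 * n₃ 1 = 0 := by simpa using C 0 1
    have C02 : n₁ 0 * n₁ 2 + n₂ 0 * n₂ 2 + n₃ 0 * n₃ 2 = 0 := by simpa using C 0 2
    have C12 : n₁ 1 * n₁ 2 + n₂ 1 * n₂ 2 + n₃ 1 * n₃ 2 = 0 := by simpa using C 1 2
    have e11 : n₁ 0 * n₁ 0 + n₁ 1 * n₁ 1 + n₁ 2 * n₁ 2 = 1 := by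
      simpa [dotProduct, Fin.sum_univ_three] using h11
    have e22 : n₂ 0 * n₂ 0 + n₂ 1 * n₂ 1 + n₂ 2 * n₂ 2 = 1 := by
      simpa [dotProduct, Fin.sum_univ_three] using h22
    have e33 : n₃ 0 * n₃ 0 + n₃ 1 * n₃ 1 + n₃ 2 * n₃ 2 = 1 := by
      simpa [dotProduct, Fin.sum_univ_three] using h33
    have e12 : n₁ 0 * n₂ 0 + n₁ 1 * n₂ 1 + n₁ 2 * n₂ 2 = 0 := by
      simpa [dotProduct, Fin.sum_univ_three] using h12
    have e13 : n₁ 0 * n₃ 0 + n₁ 1 * n₃ 1 + n₁ 2 * n₃ 2 = 0 := by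
      simpa [dotProduct, Fin.sum_univ_three] using h13
    have e23 : n₂ 0 * n₃ 0 + n₂ 1 * n₃ 1 + n₂ 2 * n₃ 2 = 0 := by
      simpa [dotProduct, Fin.sum_univ_three] using h23
    obtain ⟨r₁, hr1⟩ : ∃ x : ℝ, x = n₁ ⬝ᵥ b := ⟨_, rfl⟩
    obtain ⟨r₂, hr2⟩ : ∃ x : ℝ, x = n₂ ⬝ᵥ b := ⟨_, rfl⟩
    obtain ⟨r₃, hr3⟩ : ∃ x : ℝ, x = n₃ ⬝ᵥ b := ⟨_, rfl⟩
    have hrsum : r₁^2 + r₂^2 + r₃^2 = b 0^2 + b 1^2 + b 2^2 := by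
      simp only [hr1, hr2, hr3, dotProduct, Fin.sum_univ_three]
      linear_combination (b 0^2) * C00 + (b 1^2) * C11 + (b 2^2) * C22
        + (2 * b 0 * b 1) * C01 + (2 * b 0 * b 2) * C02 + (2 * b 1 * b 2) * C12
    have hb_eq0 : b 0 = r₁ * n₁ 0 + r₂ * n₂ 0 + r₃ * n₃ 0 := by
      simp only [hr1, hr2, hr3, dotProduct, Fin.sum_univ_three]
      linear_combination (-(b 0)) * C00 - (b 1) * C01 - (b 2) * C02
    have hb_eq1 : b 1 = r₁ * n₁ 1 + r₂ * n₂ 1 + r₃ * n₃ 1 := by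
      simp only [hr1, hr2, hr3, dotProduct, Fin.sum_univ_three]
      linear_combination (-(b 0)) * C01 - (b 1) * C11 - (b 2) * C12
    have hb_eq2 : b 2 = r₁ * n₁ 2 + r₂ * n₂ 2 + r₃ * n₃ 2 := by
      simp only [hr1, hr2, hr3, dotProduct, Fin.sum_univ_three]
      linear_combination (-(b 0)) * C02 - (b 1) * C12 - (b 2) * C22
    have hb_eq : ∀ a, b a = r₁ * n₁ a + r₂ * n₂ a + r₃ * n₃ a := by
      intro a
      fin_cases a
      exacts [hb_eq0, hb_eq1, hb_eq2]
    have hr23 : r₂^2 + r₃^2 ≤ 1 := by linarith [sq_nonneg r₁, hrsum, hb1]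
    obtain ⟨t, ht0, ht2⟩ : ∃ t : ℝ, 0 ≤ t ∧ t^2 = 1 - (r₂^2 + r₃^2) :=
      ⟨Real.sqrt (1 - (r₂^2 + r₃^2)), Real.sqrt_nonneg _, Real.sq_sqrt (by linarith)⟩
    have hr1t : r₁^2 ≤ t^2 := by rw [ht2]; linarith [hrsum, hb1, sq_nonneg r₂, sq_nonneg r₃]
    obtain ⟨q₀, q₁, hq0, hq1, hqs, hqt⟩ :
        ∃ q₀ q₁ : ℝ, 0 ≤ q₀ ∧ 0 ≤ q₁ ∧ q₀ + q₁ = 1 ∧ (q₀ - q₁) * t = r₁ := by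
      by_cases h : t = 0
      · have hr0 : r₁ = 0 := by
          have h2 : r₁^2 ≤ 0 := by rw [h] at hr1t; linarith [hr1t]
          have h3 := sq_nonneg r₁
          have h4 : r₁^2 = 0 := le_antisymm h2 h3
          exact pow_eq_zero_iff (n := 2) (by norm_num) |>.mp h4
        exact ⟨1/2, 1/2, by norm_num, by norm_num, by norm_num, by rw [h, hr0]; ring⟩
      · have htpos : 0 < t := lt_of_le_of_ne ht0 (Ne.symm h)
        have habs : |r₁| ≤ t := by
          have h5 : Real.sqrt (r₁^2) ≤ Real.sqrt (t^2) := Real.sqrt_le_sqrt hr1t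
          rwa [Real.sqrt_sq_eq_abs, Real.sqrt_sq htpos.le] at h5
        have hle := abs_le.mp habs
        refine ⟨(t + r₁)/(2*t), (t - r₁)/(2*t), ?_, ?_, ?_, ?_⟩
        · apply div_nonneg <;> linarith
        · apply div_nonneg <;> linarith
        · field_simp
          ring
        · field_simp
          ring
    have hsplus : (fun a => r₂ * n₂ a + r₃ * n₃ a + t * n₁ a) ⬝ᵥ
        (fun a => r₂ * n₂ a + r₃ * n₃ a + t * n₁ a) = 1 := by
      simp only [dotProduct, Fin.sum_univ_three]
      linear_combination (r₂^2) * e22 + (r₃^2) * e33 + (t^2) * e11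
        + (2*r₂*r₃) * e23 + (2*r₂*t) * e12 + (2*r₃*t) * e13 + ht2
    have hsminus : (fun a => r₂ * n₂ a + r₃ * n₃ a - t * n₁ a) ⬝ᵥ
        (fun a => r₂ * n₂ a + r₃ * n₃ a - t * n₁ a) = 1 := by
      simp only [dotProduct, Fin.sum_univ_three]
      linear_combination (r₂^2) * e22 + (r₃^2) * e33 + (t^2) * e11
        + (2*r₂*r₃) * e23 + (-2*r₂*t) * e12 + (-2*r₃*t) * e13 + ht2
    obtain ⟨ψp, hψpn, hψpk⟩ := exists_pure _ hsplus
    obtain ⟨ψm, hψmn, hψmk⟩ := exists_pure _ hsminus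
    have hnorm : ∀ k : Fin 2, star ((![ψp, ψm]) k) ⬝ᵥ (![ψp, ψm]) k = 1 := by
      intro k
      fin_cases k
      · simpa using hψpn
      · simpa using hψmn
    have hpsum : (∑ k : Fin 2, (![q₀, q₁]) k) = 1 := by
      simpa [Fin.sum_univ_two] using hqs
    have hdec : ρ = ∑ k : Fin 2, (![q₀, q₁]) k • ketbra ((![ψp, ψm]) k) := by
      rw [Fin.sum_univ_two]
      simp only [Matrix.cons_val_zero, Matrix.cons_val_one, Matrix.head_cons]
      rw [hψpk, hψmk, hρb]
      refine (blochMat_combo q₀ q₁ _ _ b hqs ?_).symm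
      intro a
      show q₀ * (r₂ * n₂ a + r₃ * n₃ a + t * n₁ a)
          + q₁ * (r₂ * n₂ a + r₃ * n₃ a - t * n₁ a) = b a
      rw [hb_eq a]
      linear_combination (r₂ * n₂ a + r₃ * n₃ a) * hqs + (n₁ a) * hqt
    have hEval : ∀ (nn : Fin 3 → ℝ) (s : Fin 3 → ℝ) (ψ : Fin 2 → ℂ),
        ketbra ψ = blochMat s →
        (star ψ ⬝ᵥ (Lspin nn).mulVec ψ).re = (nn ⬝ᵥ s)/2 := by
      intro nn s ψ hk
      have h1 : star ψ ⬝ᵥ (Lspin nn).mulVec ψ = (((nn ⬝ᵥ s)/2 : ℝ) : ℂ) := by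
        rw [← trace_mul_ketbra, hk, trace_Lspin_bloch]
        push_cast
        ring
      rw [h1, Complex.ofReal_re]
    have hEp2 : (star ψp ⬝ᵥ (Lspin n₂).mulVec ψp).re = r₂/2 := by
      rw [hEval n₂ _ ψp hψpk]
      simp only [dotProduct, Fin.sum_univ_three]
      linear_combination (r₂/2) * e22 + (r₃/2) * e23 + (t/2) * e12
    have hEm2 : (star ψm ⬝ᵥ (Lspin n₂).mulVec ψm).re = r₂/2 := by
      rw [hEval n₂ _ ψm hψmk]
      simp only [dotProduct, Fin.sum_univ_three]
      linear_combination (r₂/2) * e22 + (r₃/2) * e23 + (-t/2) * e12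
    have hEp3 : (star ψp ⬝ᵥ (Lspin n₃).mulVec ψp).re = r₃/2 := by
      rw [hEval n₃ _ ψp hψpk]
      simp only [dotProduct, Fin.sum_univ_three]
      linear_combination (r₂/2) * e23 + (r₃/2) * e33 + (t/2) * e13
    have hEm3 : (star ψm ⬝ᵥ (Lspin n₃).mulVec ψm).re = r₃/2 := by
      rw [hEval n₃ _ ψm hψmk]
      simp only [dotProduct, Fin.sum_univ_three]
      linear_combination (r₂/2) * e23 + (r₃/2) * e33 + (-t/2) * e13
    refine ⟨2, ![q₀, q₁], ![ψp, ψm], ?_, hpsum, hnorm, hdec, ?_⟩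
    · intro k
      fin_cases k
      · simpa using hq0
      · simpa using hq1
    · rw [main 2 (![q₀, q₁]) (![ψp, ψm]) hpsum hnorm hdec]
      rw [Fin.sum_univ_two, Fin.sum_univ_two, Fin.sum_univ_two, Fin.sum_univ_two]
      simp only [Matrix.cons_val_zero, Matrix.cons_val_one, Matrix.head_cons]
      rw [hEp2, hEm2, hEp3, hEm3]
      linear_combination (-(r₂^2/4 + r₃^2/4) * (q₀ + q₁)) * hqs
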